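/- arXiv:1608.04319 — 3 statements merged into one kernel-verified Lean document; each statement's English description precedes it below -/
import Mathlib

section
/- Let G be a finite simple graph with n ≥ 2 vertices and m edges. Then, as real numbers, NK(G^{--}) ≤ (n-2)^m · ((n+m-1) - 4m/n)^n, with equality if and only if G is regular. -/
open Finset

variable {V : Type*}

/-- The Narumi–Katayama index: the product of the degrees of all vertices. -/
def NK {W : Type*} [Fintype W] (H : SimpleGraph W) [DecidableRel H.Adj] : ℕ :=
  ∏ v, H.degree v

/-- The first Zagreb index: the sum of the squares of the degrees. -/
def M1 [Fintype V] (G : SimpleGraph V) [DecidableRel G.Adj] : ℕ :=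
  ∑ v, (G.degree v) ^ 2

/-- The multiplicative sum Zagreb index: the product over the edges of `G` of the
sum of the degrees of the two endpoints. -/
def Pi1Star [Fintype V] [DecidableEq V] (G : SimpleGraph V) [DecidableRel G.Adj] : ℕ :=
  ∏ e ∈ G.edgeFinset,
    Sym2.lift ⟨fun u v => G.degree u + G.degree v, fun u v => by simp [Nat.add_comm]⟩ e

/-- A generic transformation graph on the vertex set `V(G) ∪ E(G)`, built from a
symmetric irreflexive relation `Rvv` between vertices, a symmetric irreflexive relation
`Ree` between edges, and an incidence relation `Rve` between vertices and edges. -/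
def transGraph (G : SimpleGraph V) (Rvv : V → V → Prop) (Ree : Sym2 V → Sym2 V → Prop)
    (Rve : V → Sym2 V → Prop)
    (hvv : Symmetric Rvv) (hvv' : Irreflexive Rvv)
    (hee : Symmetric Ree) (hee' : Irreflexive Ree) :
    SimpleGraph (V ⊕ G.edgeSet) where
  Adj a b :=
    match a, b with
    | Sum.inl u, Sum.inl v => Rvv u v
    | Sum.inr e, Sum.inr f => Ree e.1 f.1
    | Sum.inl u, Sum.inr e => Rve u e.1
    | Sum.inr e, Sum.inl u => Rve u e.1
  symm := by
    constructor
    rintro (u | e) (v | f) h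
    · exact hvv h
    · exact h
    · exact h
    · exact hee h
  loopless := by
    constructor
    rintro (u | e) h
    · exact hvv' u h
    · exact hee' e.1 h

instance transGraph.instDecidableAdj (G : SimpleGraph V) (Rvv : V → V → Prop)
    (Ree : Sym2 V → Sym2 V → Prop) (Rve : V → Sym2 V → Prop)
    (h1 : Symmetric Rvv) (h2 : Irreflexive Rvv) (h3 : Symmetric Ree) (h4 : Irreflexive Ree)
    [DecidableRel Rvv] [DecidableRel Ree] [∀ u e, Decidable (Rve u e)] :
    DecidableRel (transGraph G Rvv Ree Rve h1 h2 h3 h4).Adj := fun a b =>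
  match a, b with
  | Sum.inl u, Sum.inl v => inferInstanceAs (Decidable (Rvv u v))
  | Sum.inr e, Sum.inr f => inferInstanceAs (Decidable (Ree e.1 f.1))
  | Sum.inl u, Sum.inr e => inferInstanceAs (Decidable (Rve u e.1))
  | Sum.inr e, Sum.inl u => inferInstanceAs (Decidable (Rve u e.1))

/-- Two edges (as elements of `Sym2 V`) are adjacent: distinct and sharing an endpoint. -/
abbrev shareRel : Sym2 V → Sym2 V → Prop := fun e f => e ≠ f ∧ ∃ w, w ∈ e ∧ w ∈ f

lemma shareRel_symm : Symmetric (shareRel (V := V)) :=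
  fun _ _ h => ⟨h.1.symm, h.2.imp fun _ hw => ⟨hw.2, hw.1⟩⟩

lemma shareRel_irrefl : Irreflexive (shareRel (V := V)) := fun _ h => h.1 rfl

/-- Two edges are "non-adjacent": distinct and sharing no endpoint. -/
abbrev coshareRel : Sym2 V → Sym2 V → Prop := fun e f => e ≠ f ∧ ∀ w, w ∈ e → w ∉ f

lemma coshareRel_symm : Symmetric (coshareRel (V := V)) :=
  fun _ _ h => ⟨h.1.symm, fun w hf he => h.2 w he hf⟩

lemma coshareRel_irrefl : Irreflexive (coshareRel (V := V)) := fun _ h => h.1 rfl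

/-- Non-adjacency of distinct vertices. -/
abbrev coAdj (G : SimpleGraph V) : V → V → Prop := fun u v => u ≠ v ∧ ¬ G.Adj u v

lemma coAdj_symm (G : SimpleGraph V) : Symmetric (coAdj G) :=
  fun _ _ h => ⟨h.1.symm, fun ha => h.2 ha.symm⟩

lemma coAdj_irrefl (G : SimpleGraph V) : Irreflexive (coAdj G) := fun _ h => h.1 rfl

variable [Fintype V] [DecidableEq V]

/-- The transformation graph `G^{--}`. -/
abbrev Gmm (G : SimpleGraph V) [DecidableRel G.Adj] : SimpleGraph (V ⊕ G.edgeSet) :=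
  transGraph G (coAdj G) (fun _ _ => False) (fun u e => u ∉ e)
    (coAdj_symm G) (coAdj_irrefl G) (fun _ _ h => h.elim) (fun _ h => h)

instance Gmm.instDecidableAdj (G : SimpleGraph V) [DecidableRel G.Adj] : DecidableRel (Gmm G).Adj :=
  transGraph.instDecidableAdj _ _ _ _ _ _ _ _

open Real in
lemma amgm {ι : Type*} [Fintype ι] (hc : 0 < Fintype.card ι) (f : ι → ℝ)
    (hf : ∀ i, 0 ≤ f i) :
    ∏ i, f i ≤ ((∑ i, f i) / Fintype.card ι) ^ Fintype.card ι ∧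
      (∏ i, f i = ((∑ i, f i) / Fintype.card ι) ^ Fintype.card ι ↔ ∀ i j, f i = f j) := by
  set n := Fintype.card ι with hn
  have hn0 : (n : ℝ) ≠ 0 := Nat.cast_ne_zero.2 hc.ne'
  have hnpos : (0:ℝ) < n := Nat.cast_pos.2 hc
  set μ : ℝ := (∑ i, f i) / n with hμ
  have hμ0 : 0 ≤ μ := div_nonneg (Finset.sum_nonneg fun i _ => hf i) hnpos.le
  by_cases h0 : ∃ i, f i = 0
  · obtain ⟨i0, hi0⟩ := h0
    have hprod : ∏ i, f i = 0 := Finset.prod_eq_zero (mem_univ i0) hi0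
    constructor
    · rw [hprod]; positivity
    · rw [hprod]
      rw [eq_comm, pow_eq_zero_iff hc.ne']
      constructor
      · intro hμz
        have hsum : ∑ i, f i = 0 := by
          rcases div_eq_zero_iff.1 hμz with h | h
          · exact h
          · exact absurd h hn0
        have hall : ∀ i ∈ Finset.univ, f i = 0 :=
          (Finset.sum_eq_zero_iff_of_nonneg (fun i _ => hf i)).1 hsum
        intro i j; rw [hall i (mem_univ i), hall j (mem_univ j)]
      · intro hall
        have hz : ∀ i, f i = 0 := fun i => (hall i i0).trans hi0
        simp [hμ, funext hz]
  · push_neg at h0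
    have hfpos : ∀ i, 0 < f i := fun i => (hf i).lt_of_ne' (h0 i)
    have hμpos : 0 < μ := by
      apply div_pos _ hnpos
      exact Finset.sum_pos (fun i _ => hfpos i) (Finset.univ_nonempty_iff.2
        (Fintype.card_pos_iff.1 hc))
    have hw : ∀ i ∈ (univ : Finset ι), (0:ℝ) ≤ (n:ℝ)⁻¹ := fun _ _ => by positivity
    have hw1 : ∑ _i ∈ (univ : Finset ι), (n:ℝ)⁻¹ = 1 := by
      simp [Finset.sum_const, hn]
      rw [← hn]; exact div_self hn0
    have hmem : ∀ i ∈ (univ : Finset ι), f i ∈ Set.Ioi (0:ℝ) := fun i _ => hfpos i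
    have hμsum : ∑ i, (n:ℝ)⁻¹ • f i = μ := by
      rw [← Finset.smul_sum]; simp [hμ, smul_eq_mul, inv_mul_eq_div]
    have hjensen := (strictConcaveOn_log_Ioi.concaveOn).le_map_sum hw hw1 hmem
    rw [hμsum] at hjensen
    have key : ∏ i, f i = Real.exp (∑ i, Real.log (f i)) := by
      rw [Real.exp_sum]
      exact (Finset.prod_congr rfl (fun i _ => (Real.exp_log (hfpos i)).symm))
    have keyr : μ ^ n = Real.exp (n * Real.log μ) := by
      rw [Real.exp_nat_mul, Real.exp_log hμpos]
    have hsmul : ∑ i, (n:ℝ)⁻¹ • Real.log (f i) = (n:ℝ)⁻¹ * ∑ i, Real.log (f i) := by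
      rw [← Finset.smul_sum]; simp [smul_eq_mul]
    constructor
    · rw [key, keyr]
      apply Real.exp_le_exp.2
      have := hjensen
      rw [hsmul] at this
      calc ∑ i, Real.log (f i) = n * ((n:ℝ)⁻¹ * ∑ i, Real.log (f i)) := by
            field_simp
        _ ≤ n * Real.log μ := mul_le_mul_of_nonneg_left this hnpos.le
    · rw [key, keyr, Real.exp_eq_exp]
      have heq := (strictConcaveOn_log_Ioi.map_sum_eq_iff (fun i _ => by positivity) hw1 hmem)
      rw [hμsum] at heq
      constructor
      · intro h
        have : Real.log μ = ∑ i, (n:ℝ)⁻¹ • Real.log (f i) := by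
          rw [hsmul]
          field_simp at h ⊢
          linarith [h]
        have hall := heq.1 this
        intro i j
        rw [hall i (mem_univ i), hall j (mem_univ j)]
      · intro hall
        have hfeq : ∀ i, f i = μ := by
          intro i
          have : ∑ j, f j = n * f i := by
            rw [Finset.sum_congr rfl (fun j _ => hall j i)]
            simp [hn, mul_comm]
          rw [hμ, this]; field_simp
        have : ∀ i, Real.log (f i) = Real.log μ := fun i => by rw [hfeq i]
        rw [Finset.sum_congr rfl (fun i _ => this i)]
        simp [hn, mul_comm]

set_option linter.unusedSectionVars false

lemma card_mem_sym2 (e : Sym2 V) (he : ¬ e.IsDiag) :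
    Fintype.card {u : V // u ∈ e} = 2 := by
  induction e with
  | _ x y =>
    have hxy : x ≠ y := by simpa [Sym2.isDiag_iff_proj_eq] using he
    rw [Fintype.card_subtype]
    have : Finset.univ.filter (fun u => u ∈ s(x, y)) = {x, y} := by
      ext u; simp [Sym2.mem_iff]
    rw [this, Finset.card_insert_of_notMem (by simpa using hxy), Finset.card_singleton]

lemma card_incident (G : SimpleGraph V) [DecidableRel G.Adj] (v : V) :
    Fintype.card {e : G.edgeSet // v ∈ (e : Sym2 V)} = G.degree v := by
  rw [← SimpleGraph.card_incidenceSet_eq_degree G v]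
  exact Fintype.card_congr ((Equiv.subtypeSubtypeEquivSubtypeInter
    (fun e => e ∈ G.edgeSet) (fun e => v ∈ e)))

lemma degree_Gmm_inl (G : SimpleGraph V) [DecidableRel G.Adj] (v : V) :
    (Gmm G).degree (Sum.inl v) =
      (Fintype.card V - 1 - G.degree v) + (G.edgeFinset.card - G.degree v) := by
  classical
  rw [← SimpleGraph.card_neighborSet_eq_degree]
  have e1 : ((Gmm G).neighborSet (Sum.inl v)) ≃
      {u : V // v ≠ u ∧ ¬ G.Adj v u} ⊕ {e : G.edgeSet // v ∉ (e : Sym2 V)} :=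
    Equiv.subtypeSum
  rw [Fintype.card_congr e1, Fintype.card_sum]
  congr 1
  · rw [Fintype.card_subtype]
    have : Finset.univ.filter (fun u => v ≠ u ∧ ¬ G.Adj v u)
        = Finset.univ \ insert v (G.neighborFinset v) := by
      ext u
      simp [eq_comm, SimpleGraph.mem_neighborFinset, not_or]
    rw [this, Finset.card_sdiff_of_subset (Finset.subset_univ _), Finset.card_univ,
      Finset.card_insert_of_notMem (SimpleGraph.notMem_neighborFinset_self G v),
      SimpleGraph.card_neighborFinset_eq_degree, Nat.sub_sub, Nat.add_comm]
  · rw [Fintype.card_subtype_compl, card_incident]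
    congr 1
    exact (SimpleGraph.edgeFinset_card (G := G)).symm

lemma degree_Gmm_inr (G : SimpleGraph V) [DecidableRel G.Adj] (e : G.edgeSet) :
    (Gmm G).degree (Sum.inr e) = Fintype.card V - 2 := by
  classical
  rw [← SimpleGraph.card_neighborSet_eq_degree]
  have e1 : ((Gmm G).neighborSet (Sum.inr e)) ≃
      {u : V // u ∉ (e : Sym2 V)} ⊕ {f : G.edgeSet // False} :=
    Equiv.subtypeSum
  rw [Fintype.card_congr e1, Fintype.card_sum]
  have h2 : Fintype.card {f : G.edgeSet // False} = 0 := by simp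
  rw [h2, Nat.add_zero, Fintype.card_subtype_compl,
    card_mem_sym2 _ (G.not_isDiag_of_mem_edgeSet e.2)]

theorem stmt_4 (G : SimpleGraph V) [DecidableRel G.Adj]
    (hn : 2 ≤ Fintype.card V) :
    (NK (Gmm G) : ℝ) ≤ ((Fintype.card V : ℝ) - 2) ^ G.edgeFinset.card * (((Fintype.card V : ℝ) + G.edgeFinset.card - 1) - 4 * G.edgeFinset.card / Fintype.card V) ^ Fintype.card V ∧
      ((NK (Gmm G) : ℝ) = ((Fintype.card V : ℝ) - 2) ^ G.edgeFinset.card * (((Fintype.card V : ℝ) + G.edgeFinset.card - 1) - 4 * G.edgeFinset.card / Fintype.card V) ^ Fintype.card V ↔ (∃ r, G.IsRegularOfDegree r)) := by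
  classical
  set n := Fintype.card V with hnn
  set m := G.edgeFinset.card with hmm
  have hcard : 0 < n := lt_of_lt_of_le two_pos hn
  have hn2R : (2:ℝ) ≤ (n:ℝ) := by exact_mod_cast hn
  have hn0 : (n:ℝ) ≠ 0 := by positivity
  have hVne : Nonempty V := Fintype.card_pos_iff.1 hcard
  have hdlt : ∀ v, G.degree v ≤ n - 1 :=
    fun v => Nat.le_sub_one_of_lt (G.degree_lt_card_verts v)
  have hdm : ∀ v, G.degree v ≤ m := by
    intro v
    rw [← SimpleGraph.card_incidenceFinset_eq_degree]
    apply Finset.card_le_card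
    intro e he
    rw [SimpleGraph.mem_incidenceFinset] at he
    exact SimpleGraph.mem_edgeFinset.2 he.1
  set x : V → ℝ := fun v => (n:ℝ) + m - 1 - 2 * G.degree v with hx
  have hxdef : ∀ v, ((Gmm G).degree (Sum.inl v) : ℝ) = x v := by
    intro v
    rw [degree_Gmm_inl, ← hnn, ← hmm]
    push_cast [Nat.cast_sub (hdlt v), Nat.cast_sub (hdm v),
      Nat.cast_sub (show 1 ≤ n from hcard)]
    simp only [hx]
    ring
  have hxnn : ∀ v, 0 ≤ x v := fun v => (hxdef v) ▸ Nat.cast_nonneg _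
  have hcardE : Fintype.card G.edgeSet = m := by
    rw [hmm]; exact (Set.toFinset_card _).symm
  have hNK : (NK (Gmm G) : ℝ) = (∏ v, x v) * ((n:ℝ) - 2) ^ m := by
    rw [NK, Nat.cast_prod, Fintype.prod_sum_type]
    congr 1
    · exact Finset.prod_congr rfl fun v _ => hxdef v
    · have : ∀ e : G.edgeSet, (((Gmm G).degree (Sum.inr e) : ℕ) : ℝ) = (n:ℝ) - 2 := by
        intro e
        rw [degree_Gmm_inr, ← hnn, Nat.cast_sub hn]
        norm_num
      rw [Finset.prod_congr rfl fun e _ => this e, Finset.prod_const, Finset.card_univ, hcardE]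
  have hd2 : ∑ v, (G.degree v : ℝ) = 2 * m := by
    rw [← Nat.cast_sum]
    exact_mod_cast congrArg (Nat.cast : ℕ → ℝ) (G.sum_degrees_eq_twice_card_edges)
  have hsum : ∑ v, x v = n * ((n:ℝ) + m - 1) - 4 * m := by
    simp only [hx]
    rw [Finset.sum_sub_distrib, Finset.sum_sub_distrib, Finset.sum_add_distrib]
    simp only [Finset.sum_const, Finset.card_univ, ← hnn, nsmul_eq_mul, ← Finset.mul_sum, hd2]
    ring
  have hmean : (∑ v, x v) / n = ((n:ℝ) + m - 1) - 4 * m / n := by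
    rw [hsum]; field_simp
  obtain ⟨hle, hiff⟩ := amgm (ι := V) (by rw [← hnn]; exact hcard) x hxnn
  rw [← hnn, hmean] at hle hiff
  set μ : ℝ := ((n:ℝ) + m - 1) - 4 * m / n with hμ
  have h22 : (0:ℝ) ≤ (n:ℝ) - 2 := by linarith
  constructor
  · rw [hNK, mul_comm]
    exact mul_le_mul_of_nonneg_left hle (pow_nonneg h22 m)
  · rw [hNK, mul_comm]
    by_cases hC : ((n:ℝ) - 2) ^ m = 0
    · -- n = 2, m ≠ 0
      obtain ⟨hz, hm0⟩ := pow_eq_zero_iff'.1 hC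
      have hm1 : 0 < m := Nat.pos_of_ne_zero hm0
      obtain ⟨e, he⟩ := Finset.card_pos.1 (by rw [← hmm]; exact hm1)
      induction e with
      | _ a b =>
        have hadj : G.Adj a b := SimpleGraph.mem_edgeFinset.1 he
        have hab : a ≠ b := hadj.ne
        have hda : G.degree a = 1 := by
          have h1 : 1 ≤ G.degree a := by
            rw [← SimpleGraph.card_neighborFinset_eq_degree]
            exact Finset.card_pos.2 ⟨b, (SimpleGraph.mem_neighborFinset G a b).2 hadj⟩
          have h2 : G.degree a ≤ n - 1 := hdlt a
          have hn2 : n = 2 := by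
            have : (n:ℝ) = 2 := by linarith
            exact_mod_cast this
          omega
        have hxa : x a = 0 := by
          have hm : m = 1 := by
            have hn2 : n = 2 := by
              have : (n:ℝ) = 2 := by exact_mod_cast (by linarith : (n:ℝ) = 2)
              exact_mod_cast this
            have huniv : (Finset.univ : Finset V) = {a, b} := by
              apply (Finset.eq_univ_of_card _ _).symm
              rw [Finset.card_insert_of_notMem (by simpa using hab),
                Finset.card_singleton, ← hnn, hn2]
            have hdb : G.degree b = 1 := by
              have h1 : 1 ≤ G.degree b := by
                rw [← SimpleGraph.card_neighborFinset_eq_degree]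
                exact Finset.card_pos.2 ⟨a, (SimpleGraph.mem_neighborFinset G b a).2 hadj.symm⟩
              have h2 : G.degree b ≤ n - 1 := hdlt b
              omega
            have hsum2 : ∑ v, (G.degree v : ℝ) = 2 := by
              rw [huniv, Finset.sum_insert (by simpa using hab), Finset.sum_singleton,
                hda, hdb]
              norm_num
            rw [hd2] at hsum2
            have : (m : ℝ) = 1 := by linarith
            exact_mod_cast this
          simp only [hx, hda, hm]
          have : (n:ℝ) = 2 := by linarith
          rw [this]; norm_num
        have hreg : ∃ r, G.IsRegularOfDegree r := by
          refine ⟨1, fun v => ?_⟩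
          have hn2 : n = 2 := by
            have : (n:ℝ) = 2 := by linarith
            exact_mod_cast this
          have huniv : (Finset.univ : Finset V) = {a, b} := by
            apply (Finset.eq_univ_of_card _ _).symm
            rw [Finset.card_insert_of_notMem (by simpa using hab),
              Finset.card_singleton, ← hnn, hn2]
          have hv : v ∈ ({a, b} : Finset V) := huniv ▸ Finset.mem_univ v
          have hdb : G.degree b = 1 := by
            have h1 : 1 ≤ G.degree b := by
              rw [← SimpleGraph.card_neighborFinset_eq_degree]
              exact Finset.card_pos.2 ⟨a, (SimpleGraph.mem_neighborFinset G b a).2 hadj.symm⟩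
            have h2 : G.degree b ≤ n - 1 := hdlt b
            omega
          rcases Finset.mem_insert.1 hv with h | h
          · rw [h, hda]
          · rw [Finset.mem_singleton.1 h, hdb]
        refine iff_of_true ?_ hreg
        rw [hC, Finset.prod_eq_zero (Finset.mem_univ a) hxa]
        ring
    · rw [mul_right_inj' hC, hiff]
      constructor
      · intro h
        refine ⟨G.degree (Classical.arbitrary V), fun v => ?_⟩
        have hxv := h v (Classical.arbitrary V)
        simp only [hx] at hxv
        have : (G.degree v : ℝ) = G.degree (Classical.arbitrary V) := by linarith
        exact_mod_cast this
      · rintro ⟨r, hr⟩ i j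
        simp only [hx, hr i, hr j]
end

section
/- Let G be a finite simple graph with n vertices and m ≥ 1 edges. Then, as real numbers, NK(G^{--+}) ≤ (n-1)^n · ((m+3) - M1(G)/m)^m; moreover, equality holds if G is regular. -/
open Finset

variable {V : Type*}

variable [Fintype V] [DecidableEq V]

/-- The total transformation graph `G^{--+}`. -/
abbrev Gmmp (G : SimpleGraph V) [DecidableRel G.Adj] : SimpleGraph (V ⊕ G.edgeSet) :=
  transGraph G (coAdj G) coshareRel (fun u e => u ∈ e)
    (coAdj_symm G) (coAdj_irrefl G) coshareRel_symm coshareRel_irrefl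

lemma card_coAdj (G : SimpleGraph V) [DecidableRel G.Adj] (u : V) :
    Fintype.card {v : V // coAdj G u v} = Fintype.card V - 1 - G.degree u := by
  rw [Fintype.card_subtype]
  have h : univ.filter (fun v => coAdj G u v) = univ \ insert u (G.neighborFinset u) := by
    ext v
    simp only [mem_filter, mem_univ, true_and, mem_sdiff, mem_insert,
      SimpleGraph.mem_neighborFinset, coAdj, not_or]
    exact ⟨fun ⟨h1, h2⟩ => ⟨fun h => h1 h.symm, h2⟩, fun ⟨h1, h2⟩ => ⟨fun h => h1 h.symm, h2⟩⟩
  rw [h, Finset.card_sdiff_of_subset (subset_univ _), Finset.card_insert_of_notMem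
    (SimpleGraph.notMem_neighborFinset_self G u), Finset.card_univ,
    SimpleGraph.card_neighborFinset_eq_degree]
  omega

lemma card_edge_mem (G : SimpleGraph V) [DecidableRel G.Adj] (u : V) :
    Fintype.card {e : G.edgeSet // u ∈ e.1} = G.degree u := by
  rw [← SimpleGraph.card_incidenceSet_eq_degree G u]
  exact Fintype.card_congr
    { toFun := fun e => ⟨e.1.1, e.1.2, e.2⟩
      invFun := fun e => ⟨⟨e.1, e.2.1⟩, e.2.2⟩
      left_inv := fun _ => rfl
      right_inv := fun _ => rfl }

lemma degree_inl (G : SimpleGraph V) [DecidableRel G.Adj] (u : V) :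
    (Gmmp G).degree (Sum.inl u) = Fintype.card V - 1 := by
  have h : (Gmmp G).degree (Sum.inl u)
      = Fintype.card {v : V // coAdj G u v} + Fintype.card {e : G.edgeSet // u ∈ e.1} := by
    rw [← SimpleGraph.card_neighborSet_eq_degree, ← Fintype.card_sum]
    exact Fintype.card_congr
      { toFun := fun x => match x with
          | ⟨Sum.inl v, h⟩ => Sum.inl ⟨v, h⟩
          | ⟨Sum.inr e, h⟩ => Sum.inr ⟨e, h⟩
        invFun := fun x => match x with
          | Sum.inl ⟨v, h⟩ => ⟨Sum.inl v, h⟩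
          | Sum.inr ⟨e, h⟩ => ⟨Sum.inr e, h⟩
        left_inv := by rintro ⟨(v | e), h⟩ <;> rfl
        right_inv := by rintro (⟨v, h⟩ | ⟨e, h⟩) <;> rfl }
  rw [h, card_coAdj, card_edge_mem]
  have := G.degree_lt_card_verts u
  omega

lemma card_edge_subtype (G : SimpleGraph V) [DecidableRel G.Adj]
    (P : Sym2 V → Prop) [DecidablePred P] :
    Fintype.card {f : G.edgeSet // P f.1} = (G.edgeFinset.filter P).card := by
  have h : Fintype.card {f : G.edgeSet // P f.1}
      = Fintype.card {f : Sym2 V // f ∈ G.edgeSet ∧ P f} :=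
    Fintype.card_congr
      { toFun := fun f => ⟨f.1.1, f.1.2, f.2⟩
        invFun := fun f => ⟨⟨f.1, f.2.1⟩, f.2.2⟩
        left_inv := fun _ => rfl
        right_inv := fun _ => rfl }
  rw [h, Fintype.card_subtype]
  congr 1
  ext f
  simp [SimpleGraph.mem_edgeFinset]

lemma degree_inr (G : SimpleGraph V) [DecidableRel G.Adj] {u v : V} (h : G.Adj u v) :
    (Gmmp G).degree (Sum.inr ⟨s(u, v), h⟩) + (G.degree u + G.degree v)
      = G.edgeFinset.card + 3 := by
  have hne : u ≠ v := G.ne_of_adj h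
  have hdeg : (Gmmp G).degree (Sum.inr ⟨s(u, v), h⟩)
      = Fintype.card {w : V // w ∈ s(u, v)}
        + Fintype.card {f : G.edgeSet // coshareRel s(u, v) f.1} := by
    rw [← SimpleGraph.card_neighborSet_eq_degree, ← Fintype.card_sum]
    exact Fintype.card_congr
      { toFun := fun x => match x with
          | ⟨Sum.inl w, hx⟩ => Sum.inl ⟨w, hx⟩
          | ⟨Sum.inr f, hx⟩ => Sum.inr ⟨f, hx⟩
        invFun := fun x => match x with
          | Sum.inl ⟨w, hx⟩ => ⟨Sum.inl w, hx⟩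
          | Sum.inr ⟨f, hx⟩ => ⟨Sum.inr f, hx⟩
        left_inv := by rintro ⟨(w | f), hx⟩ <;> rfl
        right_inv := by rintro (⟨w, hx⟩ | ⟨f, hx⟩) <;> rfl }
  have h2 : Fintype.card {w : V // w ∈ s(u, v)} = 2 := by
    rw [Fintype.card_subtype]
    have : univ.filter (fun w => w ∈ s(u, v)) = {u, v} := by
      ext w; simp [Sym2.mem_iff]
    rw [this, Finset.card_pair hne]
  -- the co-share count
  have hfilter : G.edgeFinset.filter (fun f => coshareRel s(u, v) f)
      = G.edgeFinset \ (G.incidenceFinset u ∪ G.incidenceFinset v) := by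
    ext f
    simp only [mem_filter, coshareRel, mem_sdiff, mem_union,
      SimpleGraph.mem_incidenceFinset, SimpleGraph.mem_edgeFinset, not_or]
    constructor
    · rintro ⟨hf, -, hsh⟩
      exact ⟨hf, fun hu => hsh u (Sym2.mem_mk_left u v) hu.2,
        fun hv => hsh v (Sym2.mem_mk_right u v) hv.2⟩
    · rintro ⟨hf, hu, hv⟩
      refine ⟨hf, fun heq => hu ?_, fun w hw hwf => ?_⟩
      · rw [← heq] at hf ⊢; exact ⟨hf, Sym2.mem_mk_left u v⟩
      · rw [Sym2.mem_iff] at hw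
        rcases hw with rfl | rfl
        · exact hu ⟨hf, hwf⟩
        · exact hv ⟨hf, hwf⟩
  have hsub : G.incidenceFinset u ∪ G.incidenceFinset v ⊆ G.edgeFinset := by
    intro f hf
    rw [Finset.mem_union] at hf
    rw [SimpleGraph.mem_edgeFinset]
    rcases hf with hf | hf
    · exact ((G.mem_incidenceFinset u f).mp hf).1
    · exact ((G.mem_incidenceFinset v f).mp hf).1
  have hinter : G.incidenceFinset u ∩ G.incidenceFinset v = {s(u, v)} := by
    rw [SimpleGraph.incidenceFinset, SimpleGraph.incidenceFinset, ← Set.toFinset_inter,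
      Set.toFinset_congr (G.incidenceSet_inter_incidenceSet_of_adj h)]
    simp
  have hcard := Finset.card_union_add_card_inter (G.incidenceFinset u) (G.incidenceFinset v)
  rw [hinter, Finset.card_singleton, SimpleGraph.card_incidenceFinset_eq_degree,
    SimpleGraph.card_incidenceFinset_eq_degree] at hcard
  have hle := Finset.card_le_card hsub
  rw [hdeg, h2, card_edge_subtype G (coshareRel s(u, v)), hfilter, Finset.card_sdiff_of_subset hsub]
  omega

theorem stmt_11 (G : SimpleGraph V) [DecidableRel G.Adj]
    (hm : 1 ≤ G.edgeFinset.card) :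
    (NK (Gmmp G) : ℝ) ≤ ((Fintype.card V : ℝ) - 1) ^ Fintype.card V * (((G.edgeFinset.card : ℝ) + 3) - (M1 G : ℝ) / G.edgeFinset.card) ^ G.edgeFinset.card ∧
      ((∃ r, G.IsRegularOfDegree r) → (NK (Gmmp G) : ℝ) = ((Fintype.card V : ℝ) - 1) ^ Fintype.card V * (((G.edgeFinset.card : ℝ) + 3) - (M1 G : ℝ) / G.edgeFinset.card) ^ G.edgeFinset.card) := by
  classical
  have hmR : (0 : ℝ) < (G.edgeFinset.card : ℝ) := by exact_mod_cast hm
  have hmne : (G.edgeFinset.card : ℝ) ≠ 0 := ne_of_gt hmR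
  have hne : Nonempty V := by
    obtain ⟨e, he⟩ := Finset.card_pos.mp hm
    induction e using Sym2.ind with
    | _ u v => exact ⟨u⟩
  have hn1 : 1 ≤ Fintype.card V := Fintype.card_pos
  set dd : Sym2 V → ℕ := Sym2.lift ⟨fun u v => G.degree u + G.degree v,
    fun u v => by simp [Nat.add_comm]⟩ with hdd
  set z : Sym2 V → ℝ := fun e => (G.edgeFinset.card : ℝ) + 3 - (dd e : ℝ) with hzdef
  -- real degree of edge-vertices
  have hinr : ∀ (e : Sym2 V) (he : e ∈ G.edgeSet),
      ((Gmmp G).degree (Sum.inr ⟨e, he⟩) : ℝ) = z e := by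
    intro e
    induction e using Sym2.ind with
    | _ u v =>
      intro he
      have h1 := degree_inr G he
      have h2 : ((Gmmp G).degree (Sum.inr ⟨s(u, v), he⟩) : ℝ)
          + ((G.degree u : ℝ) + (G.degree v : ℝ)) = (G.edgeFinset.card : ℝ) + 3 := by
        exact_mod_cast congrArg (Nat.cast : ℕ → ℝ) h1
      have h3 : (dd s(u, v) : ℝ) = (G.degree u : ℝ) + (G.degree v : ℝ) := by
        simp [hdd]
      simp only [hzdef, h3]
      linarith
  have hz : ∀ e ∈ G.edgeFinset, 0 ≤ z e := by
    intro e he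
    rw [SimpleGraph.mem_edgeFinset] at he
    rw [← hinr e he]
    positivity
  -- NK factorization
  have hNK : (NK (Gmmp G) : ℝ)
      = ((Fintype.card V : ℝ) - 1) ^ Fintype.card V * ∏ e ∈ G.edgeFinset, z e := by
    rw [NK, Fintype.prod_sum_type]
    push_cast
    congr 1
    · calc ∏ v : V, ((Gmmp G).degree (Sum.inl v) : ℝ)
          = ∏ _v : V, ((Fintype.card V : ℝ) - 1) := by
            refine Finset.prod_congr rfl fun v _ => ?_
            rw [degree_inl, Nat.cast_sub hn1, Nat.cast_one]
        _ = ((Fintype.card V : ℝ) - 1) ^ Fintype.card V := by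
            rw [Finset.prod_const, Finset.card_univ]
    · rw [Finset.prod_subtype G.edgeFinset (fun x => SimpleGraph.mem_edgeFinset)
        (fun e => z e)]
      refine Finset.prod_congr rfl fun e _ => ?_
      exact hinr e.1 e.2
  -- sum of dd over the edges equals M1
  have hsumN : ∑ e ∈ G.edgeFinset, dd e = M1 G := by
    have h1 : ∀ e ∈ G.edgeFinset, dd e = ∑ w, if w ∈ e then G.degree w else 0 := by
      intro e he
      rw [SimpleGraph.mem_edgeFinset] at he
      induction e using Sym2.ind with
      | _ u v =>
        have huv : u ≠ v := G.ne_of_adj he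
        have hfil : univ.filter (fun w => w ∈ s(u, v)) = {u, v} := by
          ext w; simp [Sym2.mem_iff]
        rw [← Finset.sum_filter, hfil, Finset.sum_pair huv]
        simp [hdd]
    rw [Finset.sum_congr rfl h1, Finset.sum_comm]
    rw [M1]
    refine Finset.sum_congr rfl fun w _ => ?_
    have hfil : G.edgeFinset.filter (fun e => w ∈ e) = G.incidenceFinset w := by
      ext e
      simp [SimpleGraph.mem_incidenceFinset, SimpleGraph.incidenceSet,
        SimpleGraph.mem_edgeFinset]
    rw [← Finset.sum_filter, hfil, Finset.sum_const,
      SimpleGraph.card_incidenceFinset_eq_degree, smul_eq_mul, sq]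
  have hsum : ∑ e ∈ G.edgeFinset, (dd e : ℝ) = (M1 G : ℝ) := by
    exact_mod_cast congrArg (Nat.cast : ℕ → ℝ) hsumN
  have hzsum : ∑ e ∈ G.edgeFinset, z e
      = (G.edgeFinset.card : ℝ) * ((G.edgeFinset.card : ℝ) + 3) - (M1 G : ℝ) := by
    simp only [hzdef]
    rw [Finset.sum_sub_distrib, hsum, Finset.sum_const, nsmul_eq_mul]
  have hmean : (∑ e ∈ G.edgeFinset, z e) / (G.edgeFinset.card : ℝ)
      = ((G.edgeFinset.card : ℝ) + 3) - (M1 G : ℝ) / (G.edgeFinset.card : ℝ) := by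
    rw [hzsum, sub_div, mul_div_cancel_left₀ _ hmne]
  have hn0 : (0 : ℝ) ≤ ((Fintype.card V : ℝ) - 1) ^ Fintype.card V := by
    have h1 : (1 : ℝ) ≤ (Fintype.card V : ℝ) := by exact_mod_cast hn1
    exact pow_nonneg (by linarith) _
  constructor
  · -- AM-GM
    have hAM := Real.geom_mean_le_arith_mean G.edgeFinset (fun _ => 1) z
      (fun _ _ => zero_le_one)
      (by rw [Finset.sum_const, nsmul_eq_mul, mul_one]; exact hmR) hz
    simp only [Real.rpow_one, one_mul, Finset.sum_const, nsmul_eq_mul, mul_one] at hAM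
    have hprod_nonneg : 0 ≤ ∏ e ∈ G.edgeFinset, z e := Finset.prod_nonneg hz
    have key : ∏ e ∈ G.edgeFinset, z e
        ≤ ((∑ e ∈ G.edgeFinset, z e) / (G.edgeFinset.card : ℝ)) ^ G.edgeFinset.card := by
      have h1 := pow_le_pow_left₀ (Real.rpow_nonneg hprod_nonneg _) hAM G.edgeFinset.card
      rwa [← Real.rpow_natCast ((∏ e ∈ G.edgeFinset, z e) ^ ((G.edgeFinset.card : ℝ))⁻¹),
        ← Real.rpow_mul hprod_nonneg, inv_mul_cancel₀ hmne, Real.rpow_one] at h1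
    rw [hNK, ← hmean]
    exact mul_le_mul_of_nonneg_left key hn0
  · rintro ⟨r, hr⟩
    have hzc : ∀ e ∈ G.edgeFinset, z e
        = (G.edgeFinset.card : ℝ) + 3 - 2 * (r : ℝ) := by
      intro e he
      induction e using Sym2.ind with
      | _ u v =>
        simp only [hzdef, hdd, Sym2.lift_mk, hr u, hr v]
        push_cast
        ring
    have hprodc : ∏ e ∈ G.edgeFinset, z e
        = ((G.edgeFinset.card : ℝ) + 3 - 2 * (r : ℝ)) ^ G.edgeFinset.card := by
      rw [Finset.prod_congr rfl hzc, Finset.prod_const]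
    have hM1 : (M1 G : ℝ) / (G.edgeFinset.card : ℝ) = 2 * (r : ℝ) := by
      have h1 : ∑ e ∈ G.edgeFinset, z e
          = (G.edgeFinset.card : ℝ) * ((G.edgeFinset.card : ℝ) + 3 - 2 * (r : ℝ)) := by
        rw [Finset.sum_congr rfl hzc, Finset.sum_const, nsmul_eq_mul]
      have h2 : (M1 G : ℝ) = (G.edgeFinset.card : ℝ) * (2 * (r : ℝ)) := by
        rw [h1] at hzsum
        linear_combination hzsum
      rw [h2, mul_div_cancel_left₀ _ hmne]
    rw [hNK, hprodc, hM1]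
end

section
/- Let G be an r-regular finite simple graph with n vertices and m edges. Then, as real numbers, NK(G^{-+-}) = (m+n-2r-1)^n · (n+2r-4)^m. -/
open Finset

variable {V : Type*}

variable [Fintype V] [DecidableEq V]

/-- The total transformation graph `G^{-+-}`. -/
abbrev Gmpm (G : SimpleGraph V) [DecidableRel G.Adj] : SimpleGraph (V ⊕ G.edgeSet) :=
  transGraph G (coAdj G) shareRel (fun u e => u ∉ e)
    (coAdj_symm G) (coAdj_irrefl G) shareRel_symm shareRel_irrefl

-- auxiliary lemmas

lemma card_filter_mem_edge (G : SimpleGraph V) [DecidableRel G.Adj] (v : V) :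
    (univ.filter fun f : G.edgeSet => v ∈ f.1).card = G.degree v := by
  rw [← Fintype.card_subtype]
  rw [← G.card_incidenceSet_eq_degree v]
  exact Fintype.card_congr (Equiv.Set.sep G.edgeSet (fun e => v ∈ e)).symm

lemma deg_inl (G : SimpleGraph V) [DecidableRel G.Adj] {r : ℕ}
    (hreg : G.IsRegularOfDegree r) (v : V) :
    (Gmpm G).degree (Sum.inl v)
      = (Fintype.card V - (r + 1)) + (G.edgeFinset.card - r) := by
  classical
  rw [← SimpleGraph.card_neighborSet_eq_degree]
  have e1 : ↥((Gmpm G).neighborSet (Sum.inl v))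
      ≃ {u : V // (Gmpm G).Adj (Sum.inl v) (Sum.inl u)}
      ⊕ {f : G.edgeSet // (Gmpm G).Adj (Sum.inl v) (Sum.inr f)} := Equiv.subtypeSum
  have h1 : Fintype.card ((Gmpm G).neighborSet (Sum.inl v))
      = Fintype.card {u : V // (Gmpm G).Adj (Sum.inl v) (Sum.inl u)}
      + Fintype.card {f : G.edgeSet // (Gmpm G).Adj (Sum.inl v) (Sum.inr f)} := by
    rw [Fintype.card_congr e1, Fintype.card_sum]
  rw [h1]
  congr 1
  · rw [Fintype.card_subtype]
    have hfe : (univ.filter fun u : V => (Gmpm G).Adj (Sum.inl v) (Sum.inl u))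
        = univ.filter fun u : V => ¬ (u = v ∨ G.Adj v u) := by
      apply Finset.filter_congr
      intro u _
      show coAdj G v u ↔ _
      constructor
      · rintro ⟨h1, h2⟩
        push_neg
        exact ⟨fun h => h1 h.symm, h2⟩
      · intro h
        push_neg at h
        exact ⟨fun h' => h.1 h'.symm, h.2⟩
    rw [hfe, Finset.filter_not, Finset.card_sdiff_of_subset (Finset.filter_subset _ _),
      Finset.card_univ]
    congr 1
    have : (univ.filter fun u : V => u = v ∨ G.Adj v u)
        = insert v (G.neighborFinset v) := by
      ext u
      simp [SimpleGraph.mem_neighborFinset, eq_comm]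
    rw [this, Finset.card_insert_of_notMem (by simp),
      G.card_neighborFinset_eq_degree, hreg v, Nat.add_comm]
  · rw [Fintype.card_subtype]
    have hfe : (univ.filter fun f : G.edgeSet => (Gmpm G).Adj (Sum.inl v) (Sum.inr f))
        = univ.filter fun f : G.edgeSet => ¬ v ∈ f.1 := rfl
    rw [hfe, Finset.filter_not, Finset.card_sdiff_of_subset (Finset.filter_subset _ _),
      Finset.card_univ, card_filter_mem_edge, hreg v, SimpleGraph.edgeFinset_card]

lemma deg_inr (G : SimpleGraph V) [DecidableRel G.Adj] {r : ℕ}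
    (hreg : G.IsRegularOfDegree r) (e : G.edgeSet) :
    (Gmpm G).degree (Sum.inr e)
      = (Fintype.card V - 2) + (2 * r - 2) := by
  classical
  obtain ⟨e, he⟩ := e
  induction e with
  | _ a b =>
  have hadj : G.Adj a b := (SimpleGraph.mem_edgeSet G).mp he
  have hab : a ≠ b := hadj.ne
  rw [← SimpleGraph.card_neighborSet_eq_degree]
  have e1 : ↥((Gmpm G).neighborSet (Sum.inr ⟨s(a,b), he⟩))
      ≃ {u : V // (Gmpm G).Adj (Sum.inr ⟨s(a,b), he⟩) (Sum.inl u)}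
      ⊕ {f : G.edgeSet // (Gmpm G).Adj (Sum.inr ⟨s(a,b), he⟩) (Sum.inr f)} := Equiv.subtypeSum
  have h1 : Fintype.card ((Gmpm G).neighborSet (Sum.inr ⟨s(a,b), he⟩))
      = Fintype.card {u : V // (Gmpm G).Adj (Sum.inr ⟨s(a,b), he⟩) (Sum.inl u)}
      + Fintype.card {f : G.edgeSet // (Gmpm G).Adj (Sum.inr ⟨s(a,b), he⟩) (Sum.inr f)} := by
    rw [Fintype.card_congr e1, Fintype.card_sum]
  rw [h1]
  congr 1
  · rw [Fintype.card_subtype]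
    have hfe : (univ.filter fun u : V => (Gmpm G).Adj (Sum.inr ⟨s(a,b), he⟩) (Sum.inl u))
        = univ.filter fun u : V => ¬ u ∈ (s(a,b) : Sym2 V) := rfl
    rw [hfe, Finset.filter_not, Finset.card_sdiff_of_subset (Finset.filter_subset _ _),
      Finset.card_univ]
    congr 1
    have : (univ.filter fun u : V => u ∈ (s(a,b) : Sym2 V)) = {a, b} := by
      ext u; simp [Sym2.mem_iff]
    rw [this, Finset.card_insert_of_notMem (by simp [hab]), Finset.card_singleton]
  · rw [Fintype.card_subtype]
    have hfe : (univ.filter fun f : G.edgeSet =>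
          (Gmpm G).Adj (Sum.inr ⟨s(a,b), he⟩) (Sum.inr f))
        = (univ.filter fun f : G.edgeSet => a ∈ f.1 ∨ b ∈ f.1).erase ⟨s(a,b), he⟩ := by
      ext f
      simp only [Finset.mem_erase, Finset.mem_filter, Finset.mem_univ, true_and]
      show shareRel s(a,b) f.1 ↔ _
      constructor
      · rintro ⟨h1, w, hw1, hw2⟩
        refine ⟨fun h => h1 (by rw [h]), ?_⟩
        rw [Sym2.mem_iff] at hw1
        rcases hw1 with rfl | rfl
        · exact Or.inl hw2
        · exact Or.inr hw2
      · rintro ⟨h1, h2⟩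
        refine ⟨fun h => h1 (Subtype.ext h.symm), ?_⟩
        rcases h2 with h2 | h2
        · exact ⟨a, by simp, h2⟩
        · exact ⟨b, by simp, h2⟩
    have hinter : (univ.filter fun f : G.edgeSet => a ∈ f.1)
        ∩ (univ.filter fun f : G.edgeSet => b ∈ f.1) = {(⟨s(a,b), he⟩ : G.edgeSet)} := by
      rw [← Finset.filter_and]
      ext f
      simp only [Finset.mem_filter, Finset.mem_univ, true_and, Finset.mem_singleton]
      rw [Sym2.mem_and_mem_iff hab]
      exact ⟨fun h => Subtype.ext h, fun h => by rw [h]⟩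
    have key := Finset.card_union_add_card_inter
      (univ.filter fun f : G.edgeSet => a ∈ f.1)
      (univ.filter fun f : G.edgeSet => b ∈ f.1)
    rw [hinter, card_filter_mem_edge, card_filter_mem_edge, hreg a, hreg b,
      Finset.card_singleton] at key
    rw [hfe, Finset.card_erase_of_mem (by simp), Finset.filter_or]
    omega

theorem stmt_19 (G : SimpleGraph V) [DecidableRel G.Adj]
    (r : ℕ)
    (hreg : G.IsRegularOfDegree r) :
    (NK (Gmpm G) : ℝ) = ((G.edgeFinset.card : ℝ) + Fintype.card V - 2 * r - 1) ^ Fintype.card V * ((Fintype.card V : ℝ) + 2 * r - 4) ^ G.edgeFinset.card := by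
  classical
  set n := Fintype.card V with hn
  set m := G.edgeFinset.card with hm
  rw [NK, Nat.cast_prod, Fintype.prod_sum_type]
  have hv : ∀ v : V, (((Gmpm G).degree (Sum.inl v) : ℕ) : ℝ)
      = (m : ℝ) + n - 2 * r - 1 := by
    intro v
    have hrn : r + 1 ≤ n := by
      have := G.degree_lt_card_verts v
      rw [hreg v] at this
      omega
    have hrm : r ≤ m := by
      have h := card_filter_mem_edge G v
      rw [hreg v] at h
      calc r = (univ.filter fun f : G.edgeSet => v ∈ f.1).card := h.symm
        _ ≤ (univ : Finset G.edgeSet).card := Finset.card_filter_le _ _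
        _ = m := by rw [Finset.card_univ, hm, SimpleGraph.edgeFinset_card]
    rw [deg_inl G hreg v, ← hn, ← hm]
    push_cast [Nat.cast_sub (by omega : r + 1 ≤ n), Nat.cast_sub hrm]
    ring
  have he : ∀ e : G.edgeSet, (((Gmpm G).degree (Sum.inr e) : ℕ) : ℝ)
      = (n : ℝ) + 2 * r - 4 := by
    intro e
    have hex : ∀ z : Sym2 V, z ∈ G.edgeSet → ∃ a b : V, G.Adj a b :=
      Sym2.ind fun x y h => ⟨x, y, (SimpleGraph.mem_edgeSet G).mp h⟩
    obtain ⟨a, b, hab⟩ := hex e.1 e.2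
    have h2n : 2 ≤ n := by
      have : Nontrivial V := ⟨a, b, hab.ne⟩
      rw [hn]
      exact Fintype.one_lt_card
    have h1r : 1 ≤ r := by
      have hpos : 0 < G.degree a := by
        rw [SimpleGraph.degree_pos_iff_exists_adj]
        exact ⟨b, hab⟩
      rw [hreg a] at hpos
      omega
    rw [deg_inr G hreg e, ← hn]
    push_cast [Nat.cast_sub h2n, Nat.cast_sub (by omega : 2 ≤ 2 * r)]
    ring
  rw [Finset.prod_congr rfl (fun v _ => hv v), Finset.prod_congr rfl (fun e _ => he e),
    Finset.prod_const, Finset.prod_const, Finset.card_univ, Finset.card_univ,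
    ← SimpleGraph.edgeFinset_card]
end
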